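/- Partial diagonalization of the symmetric coefficient matrix: let G be a finite group, ω a normalized unitary 2-cocycle on G, and (D^α)_{α ∈ A} a family of pairwise inequivalent irreducible unitary ω-projective representations of G with dimensions d_α satisfying ∑_{α ∈ A} d_α² = |G|. Let U be the matrix with rows indexed by triples θ = (α, i, j) (i, j ∈ Fin d_α), columns indexed by g ∈ G, and entries U_{θ,g} = √(d_α/|G|) · (D^α g)_{i j}. For any c : G → ℂ, let W ∈ Matrix G G ℂ have entries W_{g_l, g_r} = (1/√|G|) · ω g_r (g_r⁻¹ * g_l) · c (g_r⁻¹ * g_l). Then for all θ = (α, i, j) and θ' = (α', i', j'), (U * W * Uᴴ)_{θ, θ'} = δ_{α α'} · δ_{i i'} · (1/√|G|) · ∑_{g ∈ G} c(g) · (D^α g)_{j' j}. In particular, U * W * Uᴴ is the direct sum over α ∈ A of d_α identical copies of the d_α × d_α block with entries (1/√|G|) ∑_g c(g) (D^α g)_{j' j}. -/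

import Mathlib

open Matrix Kronecker BigOperators

noncomputable section

/-- A unitary `ω`-projective representation of `G` of dimension `d`. -/
def IsUnitaryProjRep {G : Type} [Group G] (ω : G → G → ℂ) {d : ℕ}
    (D : G → Matrix (Fin d) (Fin d) ℂ) : Prop :=
  (∀ g, D g ∈ Matrix.unitaryGroup (Fin d) ℂ) ∧
    ∀ g h, D g * D h = ω g h • D (g * h)

/-- Irreducibility: the only invariant subspaces of `ℂ^d` are `⊥` and `⊤`. -/
def IsIrred {G : Type} [Group G] {d : ℕ}
    (D : G → Matrix (Fin d) (Fin d) ℂ) : Prop :=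
  ∀ p : Submodule ℂ (Fin d → ℂ),
    (∀ g : G, ∀ v ∈ p, (D g).mulVec v ∈ p) → p = ⊥ ∨ p = ⊤

/-- Equivalence of projective representations (of possibly different stated dimensions). -/
def ProjEquiv {G : Type} [Group G] {d₁ d₂ : ℕ}
    (D₁ : G → Matrix (Fin d₁) (Fin d₁) ℂ)
    (D₂ : G → Matrix (Fin d₂) (Fin d₂) ℂ) : Prop :=
  ∃ h : d₁ = d₂, ∃ S : Matrix (Fin d₂) (Fin d₂) ℂ, IsUnit S.det ∧
    ∀ g, D₂ g = S⁻¹ * (Matrix.reindex (finCongr h) (finCongr h) (D₁ g)) * S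

/-- A normalized unitary 2-cocycle on `G`. -/
def IsCocycle {G : Type} [Group G] (ω : G → G → ℂ) : Prop :=
  (∀ g h, ‖ω g h‖ = 1) ∧ (∀ g, ω 1 g = 1) ∧ (∀ g, ω g 1 = 1) ∧
    ∀ g h k, ω g h * ω (g * h) k = ω g (h * k) * ω h k

/-- The regular representation matrix of `g`. -/
def regRep (G : Type) [Group G] [DecidableEq G] (g : G) : Matrix G G ℂ :=
  fun h h' => if h = g * h' then 1 else 0

/-- The `ω`-projective regular representation matrix of `g`. -/
def projRegRep {G : Type} [Group G] [DecidableEq G] (ω : G → G → ℂ) (g : G) :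
    Matrix G G ℂ :=
  fun h h' => if h = g * h' then ω g h' else 0

section Aux

variable {G : Type} [Group G] [Fintype G] [DecidableEq G]

lemma omega_mul_conj {ω : G → G → ℂ} (hω : IsCocycle ω) (g h : G) :
    ω g h * (starRingEnd ℂ) (ω g h) = 1 := by
  rw [Complex.mul_conj]
  norm_cast
  rw [Complex.normSq_eq_norm_sq, hω.1 g h]; norm_num

lemma eq_zero_of_mulVec {m n : ℕ} (M : Matrix (Fin m) (Fin n) ℂ)
    (h : ∀ v, M *ᵥ v = 0) : M = 0 := by
  ext i j
  have := congrFun (h (Pi.single j 1)) i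
  simpa using this

variable {d₁ d₂ : ℕ}
variable {D₁ : G → Matrix (Fin d₁) (Fin d₁) ℂ} {D₂ : G → Matrix (Fin d₂) (Fin d₂) ℂ}

lemma conj_transpose_mul {ω : G → G → ℂ} (h₂ : IsUnitaryProjRep ω D₂) (h g : G) :
    (D₂ g)ᴴ * (D₂ h)ᴴ = (starRingEnd ℂ) (ω h g) • (D₂ (h * g))ᴴ := by
  have := congrArg Matrix.conjTranspose (h₂.2 h g)
  rw [Matrix.conjTranspose_mul, Matrix.conjTranspose_smul] at this
  exact this

lemma intertwine {ω : G → G → ℂ} (hω : IsCocycle ω)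
    (h₁ : IsUnitaryProjRep ω D₁) (h₂ : IsUnitaryProjRep ω D₂)
    (M : Matrix (Fin d₁) (Fin d₂) ℂ) (h : G) :
    D₁ h * (∑ g : G, D₁ g * M * (D₂ g)ᴴ) = (∑ g : G, D₁ g * M * (D₂ g)ᴴ) * D₂ h := by
  have hfix : D₁ h * (∑ g : G, D₁ g * M * (D₂ g)ᴴ) * (D₂ h)ᴴ
      = ∑ g : G, D₁ g * M * (D₂ g)ᴴ := by
    rw [Matrix.mul_sum, Matrix.sum_mul]
    refine Fintype.sum_equiv (Equiv.mulLeft h) _ _ fun g => ?_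
    simp only [Equiv.coe_mulLeft]
    calc D₁ h * (D₁ g * M * (D₂ g)ᴴ) * (D₂ h)ᴴ
        = (D₁ h * D₁ g) * M * ((D₂ g)ᴴ * (D₂ h)ᴴ) := by
          simp only [Matrix.mul_assoc]
      _ = (ω h g • D₁ (h * g)) * M * ((starRingEnd ℂ) (ω h g) • (D₂ (h * g))ᴴ) := by
          rw [h₁.2, conj_transpose_mul h₂]
      _ = (ω h g * (starRingEnd ℂ) (ω h g)) • (D₁ (h * g) * M * (D₂ (h * g))ᴴ) := by
          simp [Matrix.smul_mul, Matrix.mul_smul, smul_smul, mul_comm]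
      _ = D₁ (h * g) * M * (D₂ (h * g))ᴴ := by
          rw [omega_mul_conj hω, one_smul]
  have hu : (D₂ h)ᴴ * D₂ h = 1 := Matrix.mem_unitaryGroup_iff'.mp (h₂.1 h)
  calc D₁ h * (∑ g : G, D₁ g * M * (D₂ g)ᴴ)
      = D₁ h * (∑ g : G, D₁ g * M * (D₂ g)ᴴ) * ((D₂ h)ᴴ * D₂ h) := by rw [hu, Matrix.mul_one]
    _ = (D₁ h * (∑ g : G, D₁ g * M * (D₂ g)ᴴ) * (D₂ h)ᴴ) * D₂ h := by
        simp only [Matrix.mul_assoc]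
    _ = (∑ g : G, D₁ g * M * (D₂ g)ᴴ) * D₂ h := by rw [hfix]

lemma schur_cross
    (hi₁ : IsIrred D₁) (hi₂ : IsIrred D₂) (hne : ¬ ProjEquiv D₁ D₂)
    (T : Matrix (Fin d₁) (Fin d₂) ℂ) (hT : ∀ g, D₁ g * T = T * D₂ g) :
    T = 0 := by
  by_contra hT0
  set f : (Fin d₂ → ℂ) →ₗ[ℂ] (Fin d₁ → ℂ) := Matrix.mulVecLin T with hf
  have hker : LinearMap.ker f = ⊥ := by
    have hinv : ∀ g : G, ∀ v ∈ LinearMap.ker f, (D₂ g) *ᵥ v ∈ LinearMap.ker f := by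
      intro g v hv
      have hv' : T *ᵥ v = 0 := hv
      have : T *ᵥ ((D₂ g) *ᵥ v) = 0 := by
        rw [Matrix.mulVec_mulVec, ← hT, ← Matrix.mulVec_mulVec, hv', Matrix.mulVec_zero]
      simpa [LinearMap.mem_ker, hf] using this
    rcases hi₂ _ hinv with h | h
    · exact h
    · refine absurd (eq_zero_of_mulVec T (fun v => ?_)) hT0
      have : v ∈ LinearMap.ker f := h ▸ Submodule.mem_top
      simpa [hf] using this
  have hrange : LinearMap.range f = ⊤ := by
    have hinv : ∀ g : G, ∀ v ∈ LinearMap.range f, (D₁ g) *ᵥ v ∈ LinearMap.range f := by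
      intro g v hv
      obtain ⟨w, hw⟩ := hv
      refine ⟨(D₂ g) *ᵥ w, ?_⟩
      have hw' : T *ᵥ w = v := hw
      have : T *ᵥ ((D₂ g) *ᵥ w) = (D₁ g) *ᵥ v := by
        rw [Matrix.mulVec_mulVec, ← hT, ← Matrix.mulVec_mulVec, hw']
      simpa [hf] using this
    rcases hi₁ _ hinv with h | h
    · refine absurd (eq_zero_of_mulVec T (fun v => ?_)) hT0
      have hm : f v ∈ LinearMap.range f := LinearMap.mem_range_self f v
      rw [h] at hm
      simpa [hf] using hm
    · exact h
  have hbij : Function.Bijective f :=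
    ⟨LinearMap.ker_eq_bot.mp hker, LinearMap.range_eq_top.mp hrange⟩
  have hdim : d₁ = d₂ := by
    have := LinearEquiv.finrank_eq (LinearEquiv.ofBijective f hbij)
    simpa [Module.finrank_fintype_fun_eq_card] using this.symm
  subst hdim
  have hinj : Function.Injective T.mulVec := by
    intro x y hxy
    exact hbij.1 hxy
  have hdet : IsUnit T.det := (Matrix.isUnit_iff_isUnit_det T).mp (Matrix.mulVec_injective_iff_isUnit.mp hinj)
  refine hne ⟨rfl, T, hdet, fun g => ?_⟩
  calc D₂ g = (T⁻¹ * T) * D₂ g := by rw [Matrix.nonsing_inv_mul T hdet, Matrix.one_mul]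
    _ = T⁻¹ * (D₁ g * T) := by rw [Matrix.mul_assoc, ← hT g]
    _ = T⁻¹ * (Matrix.reindex (finCongr rfl) (finCongr rfl) (D₁ g)) * T := by
        simp [Matrix.mul_assoc]

lemma schur_self {d : ℕ} {D : G → Matrix (Fin d) (Fin d) ℂ}
    (hi : IsIrred D) (T : Matrix (Fin d) (Fin d) ℂ)
    (hT : ∀ g, D g * T = T * D g) :
    ∃ lam : ℂ, T = lam • (1 : Matrix (Fin d) (Fin d) ℂ) := by
  rcases Nat.eq_zero_or_pos d with hd | hd
  · subst hd
    refine ⟨0, ?_⟩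
    ext i j
    exact i.elim0
  haveI : Nontrivial (Fin d → ℂ) := ⟨⟨0, 1, by
    intro h; have := congrFun h ⟨0, hd⟩; simpa using this⟩⟩
  obtain ⟨c, hc⟩ := Module.End.exists_eigenvalue (Matrix.mulVecLin T)
  obtain ⟨v, hv⟩ := hc.exists_hasEigenvector
  refine ⟨c, ?_⟩
  set M := T - c • (1 : Matrix (Fin d) (Fin d) ℂ) with hM
  have hMv : M *ᵥ v = 0 := by
    have h1 : T *ᵥ v = c • v := hv.apply_eq_smul
    rw [hM, Matrix.sub_mulVec, h1, Matrix.smul_mulVec, Matrix.one_mulVec, sub_self]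
  have hker : LinearMap.ker (Matrix.mulVecLin M) = ⊤ := by
    have hinv : ∀ g : G, ∀ w ∈ LinearMap.ker (Matrix.mulVecLin M),
        (D g) *ᵥ w ∈ LinearMap.ker (Matrix.mulVecLin M) := by
      intro g w hw
      have hw' : M *ᵥ w = 0 := hw
      have hcomm : M * D g = D g * M := by
        rw [hM, Matrix.sub_mul, Matrix.mul_sub, hT g, Matrix.smul_mul, Matrix.mul_smul,
          Matrix.one_mul, Matrix.mul_one]
      have : M *ᵥ ((D g) *ᵥ w) = 0 := by
        rw [Matrix.mulVec_mulVec, hcomm, ← Matrix.mulVec_mulVec, hw', Matrix.mulVec_zero]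
      simpa [LinearMap.mem_ker] using this
    rcases hi _ hinv with h | h
    · exfalso
      have hvmem : v ∈ LinearMap.ker (Matrix.mulVecLin M) := by
        simpa [LinearMap.mem_ker] using hMv
      rw [h] at hvmem
      exact hv.2 (by simpa using hvmem)
    · exact h
  have hM0 : M = 0 := eq_zero_of_mulVec M fun w => by
    have : w ∈ LinearMap.ker (Matrix.mulVecLin M) := hker ▸ Submodule.mem_top
    simpa using this
  rw [hM] at hM0
  exact sub_eq_zero.mp hM0

end Aux

section Ortho

variable {G : Type} [Group G] [Fintype G] [DecidableEq G]
variable {d₁ d₂ : ℕ}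
variable {D₁ : G → Matrix (Fin d₁) (Fin d₁) ℂ} {D₂ : G → Matrix (Fin d₂) (Fin d₂) ℂ}

lemma mul_std_mul (A : Matrix (Fin d₁) (Fin d₁) ℂ) (B : Matrix (Fin d₂) (Fin d₂) ℂ)
    (a : Fin d₁) (b : Fin d₂) (i : Fin d₁) (j : Fin d₂) :
    (A * Matrix.single a b (1:ℂ) * B) i j = A i a * B b j := by
  rw [Matrix.mul_apply]
  have : ∀ l, (A * Matrix.single a b (1:ℂ)) i l * B l j
      = (if l = b then A i a * B l j else 0) := by
    intro l
    rw [Matrix.mul_apply]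
    by_cases hl : l = b
    · subst hl
      simp [Matrix.single, Finset.sum_ite_eq, mul_ite, ite_mul]
    · have hl' : ¬ b = l := fun h => hl h.symm
      simp [Matrix.single, hl, hl', mul_ite, ite_mul]
  simp only [this]
  simp

lemma ortho_cross {ω : G → G → ℂ} (hω : IsCocycle ω)
    (h₁ : IsUnitaryProjRep ω D₁) (h₂ : IsUnitaryProjRep ω D₂)
    (hi₁ : IsIrred D₁) (hi₂ : IsIrred D₂) (hne : ¬ ProjEquiv D₁ D₂)
    (a i : Fin d₁) (b i' : Fin d₂) :
    ∑ g : G, D₁ g i a * (starRingEnd ℂ) (D₂ g i' b) = 0 := by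
  have hT := schur_cross hi₁ hi₂ hne
    (∑ g : G, D₁ g * Matrix.single a b 1 * (D₂ g)ᴴ)
    (fun h => intertwine hω h₁ h₂ _ h)
  have := congrFun (congrFun hT i) i'
  simpa [Matrix.sum_apply, mul_std_mul, Matrix.conjTranspose_apply] using this

lemma ortho_self {ω : G → G → ℂ} (hω : IsCocycle ω) {d : ℕ}
    {D : G → Matrix (Fin d) (Fin d) ℂ}
    (hrep : IsUnitaryProjRep ω D) (hi : IsIrred D)
    (a b i i' : Fin d) :
    ∑ g : G, D g i a * (starRingEnd ℂ) (D g i' b)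
      = ((Fintype.card G : ℂ) / (d : ℂ)) * (if a = b then 1 else 0)
          * (if i = i' then 1 else 0) := by
  have hd : (d : ℂ) ≠ 0 := by
    have : d ≠ 0 := fun h => absurd a.2 (by simp [h])
    exact_mod_cast this
  set T := ∑ g : G, D g * Matrix.single a b 1 * (D g)ᴴ with hTdef
  obtain ⟨lam, hlam⟩ := schur_self hi T (fun h => intertwine hω hrep hrep _ h)
  have htrace : T.trace = (Fintype.card G : ℂ) * (if a = b then 1 else 0) := by
    rw [hTdef, Matrix.trace_sum]
    have : ∀ g : G, (D g * Matrix.single a b 1 * (D g)ᴴ).trace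
        = (if a = b then (1:ℂ) else 0) := by
      intro g
      have hu : (D g)ᴴ * D g = 1 := Matrix.mem_unitaryGroup_iff'.mp (hrep.1 g)
      rw [Matrix.trace_mul_comm, ← Matrix.mul_assoc, hu, Matrix.one_mul]
      by_cases hab : a = b
      · subst hab; simp
      · simp [Matrix.trace_single_eq_of_ne _ _ _ hab, hab]
    simp [this]
  have htrace2 : T.trace = lam * d := by
    rw [hlam, Matrix.trace_smul, Matrix.trace_one]
    simp [mul_comm]
  have hlamval : lam = (Fintype.card G : ℂ) * (if a = b then 1 else 0) / d := by
    rw [eq_div_iff hd, ← htrace]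
    exact htrace2.symm
  have hentry : T i i' = ∑ g : G, D g i a * (starRingEnd ℂ) (D g i' b) := by
    rw [hTdef]
    simp [Matrix.sum_apply, mul_std_mul, Matrix.conjTranspose_apply]
  rw [← hentry, hlam]
  simp only [Matrix.smul_apply, Matrix.one_apply, smul_eq_mul, hlamval]
  by_cases hii : i = i' <;> by_cases hab : a = b <;> simp [hii, hab] <;> ring

end Ortho

/-- partial diagonalization of the symmetric coefficient matrix. -/
theorem partial_diagonalization_coefficient_matrix
    {G : Type} [Group G] [Fintype G] [DecidableEq G]
    (ω : G → G → ℂ) (hω : IsCocycle ω)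
    {A : Type} [Fintype A] [DecidableEq A]
    (dfam : A → ℕ)
    (Dfam : ∀ α : A, G → Matrix (Fin (dfam α)) (Fin (dfam α)) ℂ)
    (hrep : ∀ α, IsUnitaryProjRep ω (Dfam α))
    (hirr : ∀ α, IsIrred (Dfam α))
    (hinequiv : ∀ α β, α ≠ β → ¬ ProjEquiv (Dfam α) (Dfam β))
    (hdim : ∑ α : A, (dfam α) ^ 2 = Fintype.card G)
    (U : Matrix (Σ α : A, Fin (dfam α) × Fin (dfam α)) G ℂ)
    (hU : ∀ (α : A) (i j : Fin (dfam α)) (g : G),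
      U ⟨α, (i, j)⟩ g
        = (Real.sqrt ((dfam α : ℝ) / (Fintype.card G : ℝ)) : ℂ) * Dfam α g i j)
    (c : G → ℂ)
    (W : Matrix G G ℂ)
    (hW : ∀ gl gr : G,
      W gl gr = ((Real.sqrt (Fintype.card G) : ℂ))⁻¹
        * ω gr (gr⁻¹ * gl) * c (gr⁻¹ * gl)) :
    (∀ (α : A) (i j i' j' : Fin (dfam α)),
      (U * W * Uᴴ) ⟨α, (i, j)⟩ ⟨α, (i', j')⟩
        = (if i = i' then 1 else 0) * ((Real.sqrt (Fintype.card G) : ℂ))⁻¹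
            * ∑ g : G, c g * Dfam α g j' j) ∧
    (∀ (α α' : A), α ≠ α' →
      ∀ (i j : Fin (dfam α)) (i' j' : Fin (dfam α')),
        (U * W * Uᴴ) ⟨α, (i, j)⟩ ⟨α', (i', j')⟩ = 0) := by
  have hN : (Fintype.card G : ℂ) ≠ 0 := by
    exact_mod_cast (Fintype.card_pos).ne'
  have key : ∀ (α α' : A) (i j : Fin (dfam α)) (i' j' : Fin (dfam α')),
      (U * W * Uᴴ) ⟨α, (i, j)⟩ ⟨α', (i', j')⟩
        = ((Real.sqrt ((dfam α : ℝ) / (Fintype.card G : ℝ)) : ℂ))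
          * ((Real.sqrt ((dfam α' : ℝ) / (Fintype.card G : ℝ)) : ℂ))
          * ((Real.sqrt (Fintype.card G) : ℂ))⁻¹
          * ∑ g : G, c g * ∑ k : Fin (dfam α),
              (∑ gr : G, Dfam α gr i k * (starRingEnd ℂ) (Dfam α' gr i' j'))
                * Dfam α g k j := by
    intro α α' i j i' j'
    have expand : (U * W * Uᴴ) ⟨α,(i,j)⟩ ⟨α',(i',j')⟩
        = ∑ gr : G, ∑ g : G,
            U ⟨α,(i,j)⟩ (gr * g) * W (gr * g) gr
              * (starRingEnd ℂ) (U ⟨α',(i',j')⟩ gr) := by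
      rw [Matrix.mul_apply]
      refine Finset.sum_congr rfl fun gr _ => ?_
      rw [Matrix.conjTranspose_apply, Matrix.mul_apply, Finset.sum_mul]
      rw [Complex.star_def]
      exact (Fintype.sum_equiv (Equiv.mulLeft gr) _ _ fun g => rfl).symm
    have hmulrep : ∀ gr g : G, ω gr g * Dfam α (gr * g) i j
        = ∑ k, Dfam α gr i k * Dfam α g k j := by
      intro gr g
      have h1 := congrFun (congrFun ((hrep α).2 gr g) i) j
      rw [Matrix.mul_apply] at h1
      simpa [Matrix.smul_apply] using h1.symm
    have hterm : ∀ gr g : G,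
        U ⟨α,(i,j)⟩ (gr * g) * W (gr * g) gr
            * (starRingEnd ℂ) (U ⟨α',(i',j')⟩ gr)
        = ((Real.sqrt ((dfam α : ℝ) / (Fintype.card G : ℝ)) : ℂ))
          * ((Real.sqrt ((dfam α' : ℝ) / (Fintype.card G : ℝ)) : ℂ))
          * ((Real.sqrt (Fintype.card G) : ℂ))⁻¹
          * (c g * ∑ k, (Dfam α gr i k * (starRingEnd ℂ) (Dfam α' gr i' j'))
              * Dfam α g k j) := by
      intro gr g
      have h1 : ∑ k, (Dfam α gr i k * (starRingEnd ℂ) (Dfam α' gr i' j'))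
            * Dfam α g k j
          = (starRingEnd ℂ) (Dfam α' gr i' j') * (ω gr g * Dfam α (gr * g) i j) := by
        rw [hmulrep gr g, Finset.mul_sum]
        exact Finset.sum_congr rfl fun k _ => by ring
      rw [h1, hU, hU, hW]
      simp only [_root_.map_mul, Complex.conj_ofReal, inv_mul_cancel_left]
      ring
    rw [expand]
    simp only [hterm]
    simp only [Finset.mul_sum, Finset.sum_mul]
    rw [Finset.sum_comm]
    refine Finset.sum_congr rfl fun g _ => ?_
    rw [Finset.sum_comm]
  constructor
  · intro α i j i' j'
    have hd : (dfam α : ℂ) ≠ 0 := by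
      have : dfam α ≠ 0 := fun h => absurd i.2 (by simp [h])
      exact_mod_cast this
    rw [key]
    have hrw : ∀ k : Fin (dfam α),
        (∑ gr : G, Dfam α gr i k * (starRingEnd ℂ) (Dfam α gr i' j'))
          = ((Fintype.card G : ℂ) / (dfam α : ℂ)) * (if k = j' then 1 else 0)
              * (if i = i' then 1 else 0) :=
      fun k => ortho_self hω (hrep α) (hirr α) k j' i i'
    simp only [hrw]
    have hksum : ∀ g : G,
        ∑ k, (((Fintype.card G : ℂ) / (dfam α : ℂ)) * (if k = j' then 1 else 0)
            * (if i = i' then 1 else 0)) * Dfam α g k j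
          = ((Fintype.card G : ℂ) / (dfam α : ℂ)) * (if i = i' then 1 else 0)
              * Dfam α g j' j := by
      intro g
      rw [Finset.sum_eq_single j']
      · simp
      · intro k _ hk
        simp [hk]
      · intro h
        exact absurd (Finset.mem_univ j') h
    simp only [hksum]
    have hpull : ∑ g : G, c g * (((Fintype.card G : ℂ) / (dfam α : ℂ))
          * (if i = i' then 1 else 0) * Dfam α g j' j)
        = ((Fintype.card G : ℂ) / (dfam α : ℂ)) * (if i = i' then 1 else 0)
            * ∑ g : G, c g * Dfam α g j' j := by
      rw [Finset.mul_sum]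
      exact Finset.sum_congr rfl fun g _ => by ring
    rw [hpull]
    have hC : ((Real.sqrt ((dfam α : ℝ) / (Fintype.card G : ℝ)) : ℂ))
          * ((Real.sqrt ((dfam α : ℝ) / (Fintype.card G : ℝ)) : ℂ))
        = (dfam α : ℂ) / (Fintype.card G : ℂ) := by
      rw [← Complex.ofReal_mul, Real.mul_self_sqrt (by positivity)]
      push_cast
      ring
    rw [hC]
    field_simp
  · intro α α' hne i j i' j'
    rw [key]
    have hrw : ∀ k : Fin (dfam α),
        (∑ gr : G, Dfam α gr i k * (starRingEnd ℂ) (Dfam α' gr i' j')) = 0 :=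
      fun k => ortho_cross hω (hrep α) (hrep α') (hirr α) (hirr α')
        (hinequiv α α' hne) k i j' i'
    simp [hrw]
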